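/- Let X be a scheme (or just a set with a Frobenius action) over a finite field k with q elements, and let |X(k_d)| denote the number of points fixed by the d-th power of Frobenius. For a partition λ = [1^{λ_1}, ..., ν^{λ_ν}], the number of λ-tuples of points of X (i.e., tuples of distinct points consisting of λ_1 Frobenius-conjugate 1-tuples, followed by λ_2 conjugate 2-tuples, etc.) equals the product over i = 1,...,ν and j = 0,...,λ_i − 1 of ((∑_{d | i} μ(i/d) · |X(k_d)|) − i·j), where μ is the Möbius function. -/

import Mathlib

open Finset

section Aux

set_option linter.unusedSectionVars false

variable {X : Type*} [Finite X] (F : X ≃ X)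

private lemma mem_pp (x : X) : x ∈ Function.periodicPts ⇑F := by
  refine ⟨orderOf F, orderOf_pos F, ?_⟩
  show (⇑F)^[orderOf F] x = x
  rw [← Equiv.Perm.coe_pow, pow_orderOf_eq_one]
  rfl

private lemma mp_pos (x : X) : 0 < Function.minimalPeriod ⇑F x :=
  Function.minimalPeriod_pos_of_mem_periodicPts (mem_pp F x)

/-- number of points of exact degree `c` -/
private noncomputable def M (c : ℕ) : ℕ :=
  Nat.card {x : X // Function.minimalPeriod ⇑F x = c}

private lemma sum_M (d : ℕ) (hd : 0 < d) :
    ∑ e ∈ d.divisors, M F e = Nat.card {x : X // (⇑F)^[d] x = x} := by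
  classical
  have _i := Fintype.ofFinite X
  simp_rw [M, Nat.card_eq_fintype_card, Fintype.card_subtype]
  rw [Finset.card_eq_sum_card_fiberwise
    (f := fun x : X => Function.minimalPeriod ⇑F x) (t := d.divisors)
    (fun x hx => by
      rw [Finset.mem_coe, Nat.mem_divisors]
      have hp : Function.IsPeriodicPt ⇑F d x := (Finset.mem_filter.mp (Finset.mem_coe.mp hx)).2
      exact ⟨hp.minimalPeriod_dvd, hd.ne'⟩)]
  refine Finset.sum_congr rfl fun e he => ?_
  congr 1
  ext x
  simp only [Finset.mem_filter, Finset.mem_univ, true_and]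
  constructor
  · intro h
    refine ⟨?_, h⟩
    exact (Function.isPeriodicPt_minimalPeriod ⇑F x).trans_dvd
      (h ▸ (Nat.mem_divisors.mp he).1)
  · exact fun h => h.2

private lemma moebius_M (i : ℕ) (hi : 0 < i) :
    (∑ d ∈ i.divisors, (ArithmeticFunction.moebius (i / d) : ℤ) *
        (Nat.card {x : X // (⇑F)^[d] x = x} : ℤ)) = (M F i : ℤ) := by
  have h := (ArithmeticFunction.sum_eq_iff_sum_smul_moebius_eq
    (f := fun e => (M F e : ℤ))
    (g := fun d => (Nat.card {x : X // (⇑F)^[d] x = x} : ℤ))).mp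
    (fun n hn => by
      rw [← sum_M F n hn]
      push_cast
      rfl)
  have h2 := h i hi
  rw [← h2]
  rw [Nat.sum_divisorsAntidiagonal'
    (f := fun a b => (ArithmeticFunction.moebius a : ℤ) •
      (Nat.card {x : X // (⇑F)^[b] x = x} : ℤ))]
  simp [zsmul_eq_mul]

/-- the "good family" predicate for a single block -/
private def Good (c n : ℕ) (p : Fin n → X) : Prop :=
  (∀ j, Function.minimalPeriod ⇑F (p j) = c) ∧
    Function.Injective (fun q : Fin n × Fin c => (⇑F)^[(q.2 : ℕ)] (p q.1))

private lemma good_restrict {c n : ℕ} {p : Fin (n+1) → X} (hp : Good F c (n+1) p) :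
    Good F c n (fun j => p j.castSucc) := by
  constructor
  · exact fun j => hp.1 _
  · intro q q' h
    have h2 := hp.2 (a₁ := (q.1.castSucc, q.2)) (a₂ := (q'.1.castSucc, q'.2)) h
    rw [Prod.mk.injEq] at h2
    exact Prod.ext (Fin.castSucc_injective _ h2.1) h2.2

private lemma good_cross {c n : ℕ} {p : Fin (n+1) → X} (hp : Good F c (n+1) p) :
    ∀ (j : Fin n) (m m' : Fin c),
      (⇑F)^[(m : ℕ)] (p (Fin.last n)) ≠ (⇑F)^[(m' : ℕ)] (p j.castSucc) := by
  intro j m m' heq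
  have h2 := hp.2 (a₁ := (Fin.last n, m)) (a₂ := (j.castSucc, m')) heq
  rw [Prod.mk.injEq] at h2
  exact (Fin.castSucc_lt_last j).ne' h2.1

private lemma good_snoc {c n : ℕ} {p : Fin n → X} (hp : Good F c n p) {x : X}
    (hx1 : Function.minimalPeriod ⇑F x = c)
    (hx2 : ∀ (j : Fin n) (m m' : Fin c), (⇑F)^[(m : ℕ)] x ≠ (⇑F)^[(m' : ℕ)] (p j)) :
    Good F c (n+1) (Fin.snoc p x) := by
  constructor
  · intro j
    refine Fin.lastCases ?_ (fun j' => ?_) j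
    · rw [Fin.snoc_last]; exact hx1
    · rw [Fin.snoc_castSucc]; exact hp.1 j'
  · rintro ⟨j, m⟩ ⟨j', m'⟩ h
    simp only at h
    induction j using Fin.lastCases with
    | last =>
      induction j' using Fin.lastCases with
      | last =>
        rw [Fin.snoc_last] at h
        have hmm : (m : ℕ) = (m' : ℕ) := by
          apply Function.iterate_injOn_Iio_minimalPeriod (f := ⇑F) (x := x)
          · simpa [hx1] using m.2
          · simpa [hx1] using m'.2
          · exact h
        simp [Fin.ext hmm]
      | cast j' =>
        rw [Fin.snoc_last, Fin.snoc_castSucc] at h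
        exact absurd h (hx2 j' m m')
    | cast j =>
      induction j' using Fin.lastCases with
      | last =>
        rw [Fin.snoc_last, Fin.snoc_castSucc] at h
        exact absurd h.symm (hx2 j m' m)
      | cast j' =>
        rw [Fin.snoc_castSucc, Fin.snoc_castSucc] at h
        have h2 := hp.2 (a₁ := (j, m)) (a₂ := (j', m')) h
        rw [Prod.mk.injEq] at h2
        simp [h2.1, h2.2]

private lemma fib_card {c n : ℕ} (hc : 0 < c) {p : Fin n → X} (hp : Good F c n p) :
    c * n ≤ M F c ∧
    Nat.card {x : X // Function.minimalPeriod ⇑F x = c ∧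
        ∀ (j : Fin n) (m m' : Fin c), (⇑F)^[(m : ℕ)] x ≠ (⇑F)^[(m' : ℕ)] (p j)}
      = M F c - c * n := by
  classical
  have _i := Fintype.ofFinite X
  set S : Finset X := Finset.univ.filter (fun x => Function.minimalPeriod ⇑F x = c) with hS
  set T : Finset X :=
    Finset.image (fun q : Fin n × Fin c => (⇑F)^[(q.2 : ℕ)] (p q.1)) Finset.univ with hT
  have hTS : T ⊆ S := by
    intro y hy
    rw [hT, Finset.mem_image] at hy
    obtain ⟨q, _, rfl⟩ := hy
    rw [hS, Finset.mem_filter]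
    exact ⟨Finset.mem_univ _,
      (Function.minimalPeriod_apply_iterate (mem_pp F _) _).trans (hp.1 q.1)⟩
  have hTcard : T.card = c * n := by
    rw [hT, Finset.card_image_of_injective _ hp.2]
    simp [mul_comm]
  have hScard : S.card = M F c := by
    rw [M, Nat.card_eq_fintype_card, Fintype.card_subtype, hS]
  have hle : c * n ≤ M F c := by
    rw [← hScard, ← hTcard]; exact Finset.card_le_card hTS
  refine ⟨hle, ?_⟩
  have hiff : ∀ x : X,
      (Function.minimalPeriod ⇑F x = c ∧
        ∀ (j : Fin n) (m m' : Fin c), (⇑F)^[(m : ℕ)] x ≠ (⇑F)^[(m' : ℕ)] (p j))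
      ↔ (x ∈ S ∧ x ∉ T) := by
    intro x
    constructor
    · rintro ⟨h1, h2⟩
      refine ⟨by rw [hS, Finset.mem_filter]; exact ⟨Finset.mem_univ _, h1⟩, ?_⟩
      intro hxT
      rw [hT, Finset.mem_image] at hxT
      obtain ⟨⟨j, m'⟩, _, hq⟩ := hxT
      exact h2 j ⟨0, hc⟩ m' hq.symm
    · rintro ⟨h1, h2⟩
      rw [hS, Finset.mem_filter] at h1
      refine ⟨h1.2, ?_⟩
      intro j m m' heq
      apply h2
      have hper : Function.IsPeriodicPt ⇑F c x := by
        rw [← h1.2]; exact Function.isPeriodicPt_minimalPeriod ⇑F x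
      have hperp : Function.IsPeriodicPt ⇑F c (p j) := by
        rw [← hp.1 j]; exact Function.isPeriodicPt_minimalPeriod ⇑F _
      have hx : x = (⇑F)^[(c - (m : ℕ)) + (m : ℕ)] x := by
        rw [Nat.sub_add_cancel m.2.le]
        exact hper.symm
      rw [hT, Finset.mem_image]
      refine ⟨(j, ⟨((c - (m : ℕ)) + (m' : ℕ)) % c, Nat.mod_lt _ hc⟩), Finset.mem_univ _, ?_⟩
      simp only
      rw [hperp.iterate_mod_apply]
      rw [Function.iterate_add_apply, ← heq, ← Function.iterate_add_apply]
      exact hx.symm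
  have hcard : Nat.card {x : X // Function.minimalPeriod ⇑F x = c ∧
        ∀ (j : Fin n) (m m' : Fin c), (⇑F)^[(m : ℕ)] x ≠ (⇑F)^[(m' : ℕ)] (p j)}
      = (S \ T).card := by
    rw [Nat.card_eq_fintype_card, Fintype.card_subtype]
    congr 1
    ext x
    simp only [Finset.mem_filter, Finset.mem_univ, true_and, Finset.mem_sdiff]
    exact hiff x
  rw [hcard, Finset.card_sdiff_of_subset hTS, hScard, hTcard]

private lemma block_card (c : ℕ) (hc : 0 < c) (n : ℕ) :
    (Nat.card {p : Fin n → X // Good F c n p} : ℤ)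
      = ∏ j ∈ Finset.range n, ((M F c : ℤ) - c * j) := by
  classical
  have _i := Fintype.ofFinite X
  induction n with
  | zero =>
      rw [Finset.prod_range_zero]
      norm_cast
      have hall : ∀ p : Fin 0 → X, Good F c 0 p :=
        fun p => ⟨fun j => j.elim0, fun q => q.1.elim0⟩
      haveI : Unique {p : Fin 0 → X // Good F c 0 p} :=
        ⟨⟨⟨finZeroElim, hall _⟩⟩, fun a => Subtype.ext (funext fun j => j.elim0)⟩
      exact Nat.card_unique
  | succ n ih =>
      rw [Finset.prod_range_succ, ← ih]
      let Fib : (Fin n → X) → Type _ := fun p =>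
        {x : X // Function.minimalPeriod ⇑F x = c ∧
          ∀ (j : Fin n) (m m' : Fin c), (⇑F)^[(m : ℕ)] x ≠ (⇑F)^[(m' : ℕ)] (p j)}
      have E : {p : Fin (n+1) → X // Good F c (n+1) p}
          ≃ Σ p : {p : Fin n → X // Good F c n p}, Fib p.1 :=
        { toFun := fun p => ⟨⟨fun j => p.1 j.castSucc, good_restrict F p.2⟩,
            ⟨p.1 (Fin.last n), p.2.1 _, good_cross F p.2⟩⟩
          invFun := fun q => ⟨Fin.snoc q.1.1 q.2.1, good_snoc F q.1.2 q.2.2.1 q.2.2.2⟩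
          left_inv := by
            rintro ⟨p, hp⟩
            apply Subtype.ext
            show Fin.snoc (fun j => p j.castSucc) (p (Fin.last n)) = p
            funext j
            refine Fin.lastCases ?_ (fun j' => ?_) j
            · rw [Fin.snoc_last]
            · rw [Fin.snoc_castSucc]
          right_inv := by
            rintro ⟨⟨p, hp⟩, ⟨x, hx⟩⟩
            have h1 : (fun j : Fin n => (Fin.snoc p x : Fin (n+1) → X) (Fin.castSucc j)) = p := by
              funext j
              rw [Fin.snoc_castSucc]
            have hpred : ∀ y : X,
                (Function.minimalPeriod ⇑F y = c ∧ ∀ (j : Fin n) (m m' : Fin c),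
                  (⇑F)^[(m : ℕ)] y ≠ (⇑F)^[(m' : ℕ)]
                    ((fun j : Fin n => (Fin.snoc p x : Fin (n+1) → X) (Fin.castSucc j)) j)) ↔
                (Function.minimalPeriod ⇑F y = c ∧ ∀ (j : Fin n) (m m' : Fin c),
                  (⇑F)^[(m : ℕ)] y ≠ (⇑F)^[(m' : ℕ)] (p j)) := by
              rw [h1]
              exact fun _ => Iff.rfl
            refine Sigma.ext (Subtype.ext h1) ?_
            refine (Subtype.heq_iff_coe_eq hpred).mpr ?_
            show (Fin.snoc p x : Fin (n+1) → X) (Fin.last n) = x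
            rw [Fin.snoc_last] }
      rw [Nat.card_congr E]
      rcases isEmpty_or_nonempty {p : Fin n → X // Good F c n p} with hE | hE
      · have : IsEmpty (Σ p : {p : Fin n → X // Good F c n p}, Fib p.1) := by
          infer_instance
        rw [Nat.card_of_isEmpty, Nat.card_of_isEmpty]
        ring
      · obtain ⟨p0⟩ := hE
        have hle := (fib_card F hc p0.2).1
        have hsig : Nat.card (Σ p : {p : Fin n → X // Good F c n p}, Fib p.1)
            = Nat.card {p : Fin n → X // Good F c n p} * (M F c - c * n) := by
          rw [Nat.card_eq_fintype_card, Fintype.card_sigma, Nat.card_eq_fintype_card]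
          rw [Finset.sum_congr rfl (fun p _ => ?_), Finset.sum_const, smul_eq_mul,
            Finset.card_univ]
          show Fintype.card (Fib p.1) = M F c - c * n
          rw [← Nat.card_eq_fintype_card]
          exact (fib_card F hc p.2).2
        rw [hsig]
        push_cast [Nat.cast_sub hle]
        ring

end Aux

/-- Let `X` be a set with a "Frobenius" bijection `F` (e.g. the `k̄`-points of a scheme over a
finite field `k`, with `|X(k_d)|` the number of fixed points of `F^d`).  For a partition
`λ = [1^{L 1}, …, ν^{L ν}]`, the number of `λ`-tuples of points of `X` — i.e. families
consisting, for each `i`, of `L i` ordered conjugate `i`-tuples, all points distinct — equals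
`∏_{i=1}^{ν} ∏_{j=0}^{L i − 1} ((∑_{d ∣ i} μ(i/d)·|X(k_d)|) − i·j)`. -/
theorem stmt_0 {X : Type*} [Finite X] (F : X ≃ X) (ν : ℕ) (L : ℕ → ℕ)
    (N : ℕ → ℤ)
    (hN : ∀ i : ℕ, N i = ∑ d ∈ i.divisors,
      (ArithmeticFunction.moebius (i / d) : ℤ) *
        (Nat.card {x : X // (⇑F)^[d] x = x} : ℤ)) :
    (Nat.card {t : (i : Fin ν) → Fin (L ((i : ℕ) + 1)) → (Fin ((i : ℕ) + 1) → X) //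
        (∀ (i : Fin ν) (j : Fin (L ((i : ℕ) + 1))) (m : Fin ((i : ℕ) + 1)),
          F (t i j m) = t i j (m + 1)) ∧
        Function.Injective (fun p : Σ i : Fin ν, Fin (L ((i : ℕ) + 1)) × Fin ((i : ℕ) + 1) =>
          t p.1 p.2.1 p.2.2)} : ℤ)
      = ∏ i ∈ Finset.range ν, ∏ j ∈ Finset.range (L (i + 1)),
          (N (i + 1) - ((i : ℤ) + 1) * (j : ℤ)) := by
  classical
  have _i := Fintype.ofFinite X
  have hNM : ∀ i : ℕ, N (i + 1) = (M F (i + 1) : ℤ) := fun i => by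
    rw [hN, moebius_M F (i + 1) i.succ_pos]
  -- iterates of a cyclic family
  have titer : ∀ (t : (i : Fin ν) → Fin (L ((i : ℕ) + 1)) → (Fin ((i : ℕ) + 1) → X)),
      (∀ (i : Fin ν) (j : Fin (L ((i : ℕ) + 1))) (m : Fin ((i : ℕ) + 1)),
          F (t i j m) = t i j (m + 1)) →
      ∀ (i : Fin ν) (j : Fin (L ((i : ℕ) + 1))) (m : Fin ((i : ℕ) + 1)),
        t i j m = (⇑F)^[(m : ℕ)] (t i j 0) := by
    intro t h1 i j m
    obtain ⟨mv, hm⟩ := m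
    induction mv with
    | zero => congr 1
    | succ k ihk =>
        have hk : k < (i : ℕ) + 1 := Nat.lt_of_succ_lt hm
        have hkl : (⟨k, hk⟩ : Fin ((i : ℕ) + 1)) ≠ Fin.last (i : ℕ) := by
          intro hc
          have : k = (i : ℕ) := by simpa [Fin.ext_iff] using hc
          omega
        have hstep := h1 i j ⟨k, hk⟩
        have hval : (⟨k, hk⟩ + 1 : Fin ((i : ℕ) + 1)) = ⟨k + 1, hm⟩ := by
          rw [Fin.ext_iff, Fin.val_add_one]
          simp [hkl]
        rw [hval] at hstep
        rw [← hstep, ihk hk]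
        exact (Function.iterate_succ_apply' ⇑F k _).symm
  have hlast0 : ∀ i : Fin ν, (Fin.last (i : ℕ) + 1 : Fin ((i : ℕ) + 1)) = 0 := by
    intro i
    rw [Fin.ext_iff, Fin.val_add_one]
    simp
  -- forward direction: goodness of each block
  have fwd_good : ∀ (t : (i : Fin ν) → Fin (L ((i : ℕ) + 1)) → (Fin ((i : ℕ) + 1) → X))
      (h1 : ∀ (i : Fin ν) (j : Fin (L ((i : ℕ) + 1))) (m : Fin ((i : ℕ) + 1)),
          F (t i j m) = t i j (m + 1))
      (h2 : Function.Injective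
        (fun p : Σ i : Fin ν, Fin (L ((i : ℕ) + 1)) × Fin ((i : ℕ) + 1) =>
          t p.1 p.2.1 p.2.2))
      (i : Fin ν), Good F ((i : ℕ) + 1) (L ((i : ℕ) + 1)) (fun j => t i j 0) := by
    intro t h1 h2 i
    have hiter := titer t h1 i
    have hper : ∀ j, Function.IsPeriodicPt ⇑F ((i : ℕ) + 1) (t i j 0) := by
      intro j
      have hl := h1 i j (Fin.last (i : ℕ))
      rw [hiter j (Fin.last (i : ℕ)), hlast0 i] at hl
      show (⇑F)^[(i : ℕ) + 1] (t i j 0) = t i j 0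
      rw [Function.iterate_succ_apply']
      exact hl
    constructor
    · intro j
      simp only
      have hdvd : Function.minimalPeriod ⇑F (t i j 0) ∣ (i : ℕ) + 1 :=
        (hper j).minimalPeriod_dvd
      have hpos := mp_pos F (t i j 0)
      have hle : Function.minimalPeriod ⇑F (t i j 0) ≤ (i : ℕ) + 1 :=
        Nat.le_of_dvd (Nat.succ_pos _) hdvd
      by_contra hne
      have hlt : Function.minimalPeriod ⇑F (t i j 0) < (i : ℕ) + 1 :=
        lt_of_le_of_ne hle hne
      set e := Function.minimalPeriod ⇑F (t i j 0) with he
      have hEe : t i j ⟨e, hlt⟩ = t i j 0 := by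
        rw [hiter j ⟨e, hlt⟩]
        exact Function.isPeriodicPt_minimalPeriod ⇑F (t i j 0)
      have heq := h2 (a₁ := ⟨i, (j, ⟨e, hlt⟩)⟩) (a₂ := ⟨i, (j, 0)⟩) hEe
      simp only [Sigma.mk.inj_iff, heq_eq_eq, Prod.mk.injEq, true_and] at heq
      have h0 : (⟨e, hlt⟩ : Fin ((i : ℕ) + 1)) = 0 := heq
      rw [Fin.ext_iff] at h0
      simp only [Fin.val_zero] at h0
      omega
    · intro q q' h
      simp only at h
      rw [← hiter q.1 q.2, ← hiter q'.1 q'.2] at h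
      have heq := h2 (a₁ := ⟨i, (q.1, q.2)⟩) (a₂ := ⟨i, (q'.1, q'.2)⟩) h
      simp only [Sigma.mk.inj_iff, heq_eq_eq, Prod.mk.injEq, true_and] at heq
      exact Prod.ext heq.1 heq.2
  -- backward direction: cyclicity
  have bwd_cyc : ∀ (p : (i : Fin ν) → Fin (L ((i : ℕ) + 1)) → X),
      (∀ i : Fin ν, Good F ((i : ℕ) + 1) (L ((i : ℕ) + 1)) (p i)) →
      ∀ (i : Fin ν) (j : Fin (L ((i : ℕ) + 1))) (m : Fin ((i : ℕ) + 1)),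
        F ((⇑F)^[(m : ℕ)] (p i j)) = (⇑F)^[((m + 1 : Fin ((i : ℕ) + 1)) : ℕ)] (p i j) := by
    intro p hp i j m
    have hper : Function.IsPeriodicPt ⇑F ((i : ℕ) + 1) (p i j) := by
      rw [← (hp i).1 j]; exact Function.isPeriodicPt_minimalPeriod ⇑F _
    rw [← Function.iterate_succ_apply' ⇑F (m : ℕ) (p i j)]
    by_cases hm : m = Fin.last (i : ℕ)
    · subst hm
      rw [hlast0 i]
      show (⇑F)^[(i : ℕ) + 1] (p i j) = (⇑F)^[0] (p i j)
      exact hper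
    · have hval : ((m + 1 : Fin ((i : ℕ) + 1)) : ℕ) = (m : ℕ) + 1 := by
        rw [Fin.val_add_one]; simp [hm]
      rw [hval]
  -- backward direction: injectivity
  have bwd_inj : ∀ (p : (i : Fin ν) → Fin (L ((i : ℕ) + 1)) → X),
      (∀ i : Fin ν, Good F ((i : ℕ) + 1) (L ((i : ℕ) + 1)) (p i)) →
      Function.Injective
        (fun q : Σ i : Fin ν, Fin (L ((i : ℕ) + 1)) × Fin ((i : ℕ) + 1) =>
          (⇑F)^[((q.2.2 : Fin ((q.1 : ℕ) + 1)) : ℕ)] (p q.1 q.2.1)) := by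
    intro p hp
    rintro ⟨i, j, m⟩ ⟨i', j', m'⟩ h
    simp only at h
    have hmp : ((i : ℕ) + 1) = ((i' : ℕ) + 1) := by
      have e1 : Function.minimalPeriod ⇑F ((⇑F)^[(m : ℕ)] (p i j)) = (i : ℕ) + 1 := by
        rw [Function.minimalPeriod_apply_iterate (mem_pp F _)]
        exact (hp i).1 j
      have e2 : Function.minimalPeriod ⇑F ((⇑F)^[(m' : ℕ)] (p i' j')) = (i' : ℕ) + 1 := by
        rw [Function.minimalPeriod_apply_iterate (mem_pp F _)]
        exact (hp i').1 j'
      rw [← e1, ← e2, h]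
    have hii : i = i' := Fin.ext (Nat.succ_injective hmp)
    subst hii
    have heq := (hp i).2 (a₁ := (j, m)) (a₂ := (j', m')) h
    rw [Prod.mk.injEq] at heq
    rw [heq.1, heq.2]
  -- the main equivalence
  have E : {t : (i : Fin ν) → Fin (L ((i : ℕ) + 1)) → (Fin ((i : ℕ) + 1) → X) //
        (∀ (i : Fin ν) (j : Fin (L ((i : ℕ) + 1))) (m : Fin ((i : ℕ) + 1)),
          F (t i j m) = t i j (m + 1)) ∧
        Function.Injective (fun p : Σ i : Fin ν, Fin (L ((i : ℕ) + 1)) × Fin ((i : ℕ) + 1) =>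
          t p.1 p.2.1 p.2.2)}
      ≃ ∀ i : Fin ν,
          {p : Fin (L ((i : ℕ) + 1)) → X // Good F ((i : ℕ) + 1) (L ((i : ℕ) + 1)) p} :=
    Equiv.trans
      { toFun := fun t => ⟨fun i j => t.1 i j 0, fun i => fwd_good t.1 t.2.1 t.2.2 i⟩
        invFun := fun p => ⟨fun i j m => (⇑F)^[(m : ℕ)] (p.1 i j),
          fun i j m => bwd_cyc p.1 p.2 i j m, bwd_inj p.1 p.2⟩
        left_inv := by
          rintro ⟨t, h1, h2⟩
          apply Subtype.ext
          funext i j m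
          exact (titer t h1 i j m).symm
        right_inv := by
          rintro ⟨p, hp⟩
          apply Subtype.ext
          funext i j
          rfl }
      Equiv.subtypePiEquivPi
  rw [Nat.card_congr E, Nat.card_pi]
  push_cast
  rw [Fin.prod_univ_eq_prod_range
    (fun i : ℕ => (Nat.card
      {p : Fin (L (i + 1)) → X // Good F (i + 1) (L (i + 1)) p} : ℤ)) ν]
  refine Finset.prod_congr rfl fun i _ => ?_
  rw [block_card F (i + 1) i.succ_pos (L (i + 1))]
  refine Finset.prod_congr rfl fun j _ => ?_
  rw [hNM i]
  push_cast
  ring
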